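/- Let α be a real number with 1 < α < 2. For every complex number y and every complex number w with |w| < 1, the series Σ_{n=1}^∞ B_{n,1} w^n/n! converges absolutely and the exponential generating identity exp( y Σ_{n=1}^∞ B_{n,1} w^n/n! ) = 1 + Σ_{n=1}^∞ (w^n/n!) Σ_{k=1}^n y^k B_{n,k} holds, the double series on the right converging absolutely. -/

import Mathlib

open scoped Real BigOperators
open MeasureTheory Filter Asymptotics

/-- `B_{n,1} = (2-α)_{n-1} / ((n+1)(n+2))`, where `(x)_m` is the rising factorial. -/
noncomputable def B1 (α : ℝ) (n : ℕ) : ℝ :=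
  (ascPochhammer ℝ (n - 1)).eval (2 - α) / ((n + 1 : ℝ) * (n + 2 : ℝ))

/-- The coefficients `B_{n,k}`: `B_{n,1}` as above and
`B_{n,k+1} = (1/(k+1)) Σ_{l=k}^{n-1} C(n,l) B_{n-l,1} B_{l,k}` for `k ≥ 1`. -/
noncomputable def Bc (α : ℝ) : ℕ → ℕ → ℝ
  | _, 0 => 0
  | n, 1 => B1 α n
  | n, (k + 2) =>
      (1 / (k + 2 : ℝ)) *
        ∑ l ∈ Finset.Icc (k + 1) (n - 1),
          (n.choose l : ℝ) * B1 α (n - l) * Bc α l (k + 1)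

lemma asc_nonneg {x : ℝ} (hx : 0 ≤ x) (m : ℕ) : 0 ≤ (ascPochhammer ℝ m).eval x := by
  induction m with
  | zero => simp
  | succ m ih =>
    rw [ascPochhammer_succ_eval]
    exact mul_nonneg ih (by positivity)

lemma asc_le {x : ℝ} (hx0 : 0 ≤ x) (hx1 : x ≤ 1) (m : ℕ) :
    (ascPochhammer ℝ m).eval x ≤ m.factorial := by
  induction m with
  | zero => simp
  | succ m ih =>
    rw [ascPochhammer_succ_eval, Nat.factorial_succ]
    calc (ascPochhammer ℝ m).eval x * (x + m) ≤ (m.factorial : ℝ) * (x + m) := by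
          have := asc_nonneg hx0 m
          gcongr
      _ ≤ (m.factorial : ℝ) * (1 + m) := by gcongr
      _ = ((m + 1) * m.factorial : ℕ) := by push_cast; ring

lemma B1_nonneg {α : ℝ} (hα₂ : α < 2) (n : ℕ) : 0 ≤ B1 α n := by
  unfold B1
  apply div_nonneg (asc_nonneg (by linarith) _) (by positivity)

lemma B1_le_factorial {α : ℝ} (hα₁ : 1 < α) (hα₂ : α < 2) (n : ℕ) :
    B1 α n ≤ n.factorial := by
  unfold B1
  have h1 : (ascPochhammer ℝ (n-1)).eval (2-α) ≤ (n-1).factorial :=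
    asc_le (by linarith) (by linarith) _
  have h2 : ((n-1).factorial : ℝ) ≤ n.factorial := by
    exact_mod_cast Nat.factorial_le (by omega)
  have h0 : (0:ℝ) ≤ n := n.cast_nonneg
  have h3 : (1:ℝ) ≤ (n+1:ℝ) * (n+2:ℝ) := by nlinarith
  have := asc_nonneg (show (0:ℝ) ≤ 2 - α by linarith) (n-1)
  calc (ascPochhammer ℝ (n-1)).eval (2-α) / ((n+1:ℝ)*(n+2:ℝ))
      ≤ (ascPochhammer ℝ (n-1)).eval (2-α) := div_le_self this h3
    _ ≤ ((n-1).factorial : ℝ) := h1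
    _ ≤ n.factorial := h2

lemma Bc_nonneg {α : ℝ} (hα₂ : α < 2) : ∀ k n, 0 ≤ Bc α n k := by
  intro k
  induction k with
  | zero => intro n; rw [Bc]
  | succ k ih =>
    intro n
    match k with
    | 0 => rw [Bc]; exact B1_nonneg hα₂ n
    | k + 1 =>
      rw [Bc]
      apply mul_nonneg (by positivity)
      apply Finset.sum_nonneg
      intro l hl
      exact mul_nonneg (mul_nonneg (by positivity) (B1_nonneg hα₂ _)) (ih l)

lemma Bc_eq_zero_of_le {α : ℝ} (n k : ℕ) (hn : n ≤ k + 1) : Bc α n (k + 2) = 0 := by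
  rw [Bc]
  rw [Finset.Icc_eq_empty (by omega)]
  simp

noncomputable def gc (α : ℝ) (w : ℂ) (k n : ℕ) : ℂ :=
  if n = 0 then 0 else (Bc α n k : ℂ) * w ^ n / n.factorial

lemma gc_zero (α : ℝ) (w : ℂ) (k : ℕ) : gc α w k 0 = 0 := rfl

lemma gc_succ (α : ℝ) (w : ℂ) (k n : ℕ) :
    gc α w k (n + 1) = (Bc α (n + 1) k : ℂ) * w ^ (n + 1) / (n + 1).factorial := rfl

lemma gc_norm {α : ℝ} (hα₂ : α < 2) (w : ℂ) (k n : ℕ) :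
    ((‖gc α w k n‖ : ℝ) : ℂ) = gc α ((‖w‖ : ℝ) : ℂ) k n := by
  unfold gc
  rcases eq_or_ne n 0 with h | h
  · simp [h]
  · simp only [if_neg h]
    rw [norm_div, norm_mul, norm_pow, Complex.norm_real, Complex.norm_natCast,
      Real.norm_eq_abs, abs_of_nonneg (Bc_nonneg hα₂ k n)]
    push_cast
    ring

lemma gc_norm_le {α : ℝ} (hα₁ : 1 < α) (hα₂ : α < 2) (w : ℂ) (n : ℕ) :
    ‖gc α w 1 n‖ ≤ ‖w‖ ^ n := by
  rcases eq_or_ne n 0 with h | h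
  · simp [h, gc_zero]
  · unfold gc
    rw [if_neg h, norm_div, norm_mul, norm_pow, Complex.norm_real, Complex.norm_natCast,
      Real.norm_eq_abs, abs_of_nonneg (Bc_nonneg hα₂ 1 n)]
    have h1 : Bc α n 1 ≤ n.factorial := by
      rw [Bc]; exact B1_le_factorial hα₁ hα₂ n
    have h2 : (0:ℝ) < n.factorial := by exact_mod_cast n.factorial_pos
    rw [div_le_iff₀ h2]
    calc Bc α n 1 * ‖w‖ ^ n ≤ (n.factorial : ℝ) * ‖w‖ ^ n := by
          have := pow_nonneg (norm_nonneg w) n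
          gcongr
      _ = ‖w‖ ^ n * n.factorial := by ring

lemma summable_g1 {α : ℝ} (hα₁ : 1 < α) (hα₂ : α < 2) {w : ℂ} (hw : ‖w‖ < 1) :
    Summable fun n => ‖gc α w 1 n‖ :=
  Summable.of_nonneg_of_le (fun _ => norm_nonneg _) (gc_norm_le hα₁ hα₂ w)
    (summable_geometric_of_lt_one (norm_nonneg w) hw)

lemma cauchy_id {α : ℝ} (w : ℂ) (k n : ℕ) :
    ∑ p ∈ Finset.HasAntidiagonal.antidiagonal n, gc α w (k + 1) p.1 * gc α w 1 p.2
      = (k + 2 : ℂ) * gc α w (k + 2) n := by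
  rw [Finset.Nat.sum_antidiagonal_eq_sum_range_succ_mk]
  rcases Nat.eq_zero_or_pos n with rfl | hn
  · simp [gc_zero]
  obtain ⟨m, rfl⟩ : ∃ m, n = m + 1 := ⟨n - 1, by omega⟩
  have hsub : ∀ j ∈ Finset.range (m + 1 + 1), j ∉ Finset.Icc (k + 1) m →
      gc α w (k + 1) j * gc α w 1 (m + 1 - j) = 0 := by
    intro j hj hj'
    rw [Finset.mem_range] at hj
    rw [Finset.mem_Icc, not_and_or] at hj'
    rcases hj' with hj' | hj'
    · push_neg at hj'
      rcases Nat.eq_zero_or_pos j with rfl | hj0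
      · simp [gc_zero]
      · have : j ≤ k := by omega
        rcases Nat.exists_eq_add_of_le (show 1 ≤ k by omega) with ⟨k', rfl⟩
        have : Bc α j (k' + 2) = 0 := Bc_eq_zero_of_le j k' (by omega)
        unfold gc
        rw [if_neg (by omega), show 1 + k' + 1 = k' + 2 by omega, this]
        simp
    · push_neg at hj'
      have : j = m + 1 := by omega
      subst this
      simp [gc_zero]
  rw [← Finset.sum_subset
      (fun j hj => Finset.mem_range.mpr (by have := Finset.mem_Icc.mp hj; omega)) hsub]
  have hne : ((k : ℂ) + 2) ≠ 0 := by
    exact_mod_cast Nat.cast_add_one_ne_zero (R := ℂ) (k + 1)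
  rw [gc, if_neg (by omega), Bc, show (m + 1) - 1 = m from rfl]
  push_cast
  rw [mul_div_assoc, ← mul_assoc, ← mul_assoc, mul_one_div, div_self hne, one_mul,
    ← mul_div_assoc, Finset.sum_mul, Finset.sum_div]
  refine Finset.sum_congr rfl fun j hj => ?_
  rw [Finset.mem_Icc] at hj
  have hj1 : j ≠ 0 := by omega
  have hj2 : m + 1 - j ≠ 0 := by omega
  rw [gc, if_neg hj1, gc, if_neg hj2, show Bc α (m + 1 - j) 1 = B1 α (m + 1 - j) from by rw [Bc]]
  have hw' : w ^ j * w ^ (m + 1 - j) = w ^ (m + 1) := by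
    rw [← pow_add]; congr 1; omega
  have key : (((m + 1).choose j : ℕ) * j.factorial * (m + 1 - j).factorial : ℂ)
      = ((m + 1).factorial : ℂ) := by
    exact_mod_cast congrArg (Nat.cast (R := ℂ))
      (Nat.choose_mul_factorial_mul_factorial (show j ≤ m + 1 by omega))
  have hfj : (j.factorial : ℂ) ≠ 0 := by exact_mod_cast j.factorial_ne_zero
  have hfj2 : ((m + 1 - j).factorial : ℂ) ≠ 0 := by exact_mod_cast (m + 1 - j).factorial_ne_zero
  have hfm : (((m + 1).factorial : ℕ) : ℂ) ≠ 0 := by exact_mod_cast (m + 1).factorial_ne_zero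
  field_simp
  rw [← key, ← hw']
  ring

lemma tsum_gc {α : ℝ} (hα₁ : 1 < α) (hα₂ : α < 2) {w : ℂ} (hw : ‖w‖ < 1) :
    ∀ k : ℕ, (Summable fun n => ‖gc α w (k + 1) n‖) ∧
      (∑' n, gc α w (k + 1) n) = (∑' n, gc α w 1 n) ^ (k + 1) / (k + 1).factorial := by
  intro k
  induction k with
  | zero => exact ⟨summable_g1 hα₁ hα₂ hw, by simp⟩
  | succ k ih =>
    obtain ⟨hs, ht⟩ := ih
    have hg1 := summable_g1 hα₁ hα₂ hw
    have hc : Summable fun n => ‖∑ p ∈ Finset.HasAntidiagonal.antidiagonal n,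
        gc α w (k + 1) p.1 * gc α w 1 p.2‖ :=
      summable_norm_sum_mul_antidiagonal_of_summable_norm hs hg1
    have hc' : Summable fun n => ‖(k + 2 : ℂ) * gc α w (k + 2) n‖ := by
      refine hc.congr fun n => ?_
      rw [cauchy_id]
    have hne : ((k : ℂ) + 2) ≠ 0 := by
      exact_mod_cast Nat.cast_add_one_ne_zero (R := ℂ) (k + 1)
    have hnr : ‖(k + 2 : ℂ)‖ ≠ 0 := norm_ne_zero_iff.mpr hne
    have hsum2 : Summable fun n => ‖gc α w (k + 2) n‖ := by
      refine (hc'.mul_left ‖(k + 2 : ℂ)‖⁻¹).congr fun n => ?_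
      rw [norm_mul, ← mul_assoc, inv_mul_cancel₀ hnr, one_mul]
    have htsum : (∑' n, gc α w (k + 1) n) * (∑' n, gc α w 1 n)
        = (k + 2 : ℂ) * ∑' n, gc α w (k + 2) n := by
      rw [tsum_mul_tsum_eq_tsum_sum_antidiagonal_of_summable_norm hs hg1]
      rw [tsum_congr fun n => cauchy_id (α := α) w k n, tsum_mul_left]
    refine ⟨by exact_mod_cast hsum2, ?_⟩
    have : (∑' n, gc α w (k + 2) n)
        = (∑' n, gc α w (k + 1) n) * (∑' n, gc α w 1 n) / (k + 2 : ℂ) := by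
      rw [htsum]; field_simp
    rw [show k + 1 + 1 = k + 2 from rfl] at *
    rw [this, ht]
    have hfk : (((k + 1).factorial : ℕ) : ℂ) ≠ 0 := by exact_mod_cast (k + 1).factorial_ne_zero
    rw [Nat.factorial_succ (k + 1)]
    push_cast
    rw [div_mul_eq_mul_div, div_div, ← pow_succ]
    ring_nf

lemma tsum_norm_gc {α : ℝ} (hα₁ : 1 < α) (hα₂ : α < 2) {w : ℂ} (hw : ‖w‖ < 1) (k : ℕ) :
    (∑' n, ‖gc α w (k + 1) n‖)
      = (∑' n, ‖gc α w 1 n‖) ^ (k + 1) / (k + 1).factorial := by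
  have hw' : ‖((‖w‖ : ℝ) : ℂ)‖ < 1 := by
    rwa [Complex.norm_real, Real.norm_eq_abs, abs_of_nonneg (norm_nonneg w)]
  apply Complex.ofReal_injective
  calc ((∑' n, ‖gc α w (k + 1) n‖ : ℝ) : ℂ)
      = ∑' n, (‖gc α w (k + 1) n‖ : ℂ) := Complex.ofReal_tsum _
    _ = ∑' n, gc α ((‖w‖ : ℝ) : ℂ) (k + 1) n := tsum_congr fun n => gc_norm hα₂ w (k + 1) n
    _ = (∑' n, gc α ((‖w‖ : ℝ) : ℂ) 1 n) ^ (k + 1) / (k + 1).factorial :=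
        (tsum_gc hα₁ hα₂ hw' k).2
    _ = (∑' n, (‖gc α w 1 n‖ : ℂ)) ^ (k + 1) / (k + 1).factorial := by
        rw [tsum_congr fun n => (gc_norm hα₂ w 1 n)]
    _ = ((∑' n, ‖gc α w 1 n‖ : ℝ) : ℂ) ^ (k + 1) / (k + 1).factorial := by
        rw [Complex.ofReal_tsum]
    _ = (((∑' n, ‖gc α w 1 n‖) ^ (k + 1) / (k + 1).factorial : ℝ) : ℂ) := by
        push_cast; ring

noncomputable def E (α : ℝ) (w y : ℂ) (k n : ℕ) : ℂ := y ^ (k + 1) * gc α w (k + 1) n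


/-- For `1 < α < 2`, every `y ∈ ℂ` and every `w ∈ ℂ` with `|w| < 1`, the
series `Σ_{n≥1} B_{n,1} w^n/n!` converges absolutely and
`exp(y Σ_{n≥1} B_{n,1} w^n/n!) = 1 + Σ_{n≥1} (w^n/n!) Σ_{k=1}^n y^k B_{n,k}`, the series on
the right converging absolutely. -/
theorem Bell_generating_identity (α : ℝ) (hα₁ : 1 < α) (hα₂ : α < 2)
    (y w : ℂ) (hw : ‖w‖ < 1) :
    Summable (fun n : ℕ => ‖(Bc α (n + 1) 1 : ℂ) * w ^ (n + 1) / (n + 1).factorial‖) ∧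
    Complex.exp (y * ∑' n : ℕ, (Bc α (n + 1) 1 : ℂ) * w ^ (n + 1) / (n + 1).factorial) =
        1 + ∑' n : ℕ,
          (w ^ (n + 1) / (n + 1).factorial) *
            ∑ k ∈ Finset.Icc 1 (n + 1), y ^ k * (Bc α (n + 1) k : ℂ) ∧
    Summable (fun n : ℕ =>
      ‖(w ^ (n + 1) / (n + 1).factorial : ℂ) *
          ∑ k ∈ Finset.Icc 1 (n + 1), y ^ k * (Bc α (n + 1) k : ℂ)‖) := by
  have hg1 : Summable fun n => ‖gc α w 1 n‖ := summable_g1 hα₁ hα₂ hw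
  have hg1' : Summable fun n => gc α w 1 n := hg1.of_norm
  have goal1 : Summable (fun n : ℕ =>
      ‖(Bc α (n + 1) 1 : ℂ) * w ^ (n + 1) / (n + 1).factorial‖) := by
    have h := (summable_nat_add_iff (f := fun n => ‖gc α w 1 n‖) 1).mpr hg1
    exact h.congr fun n => by rw [gc_succ]
  have hT : (∑' n, gc α w 1 n)
      = ∑' n : ℕ, (Bc α (n + 1) 1 : ℂ) * w ^ (n + 1) / (n + 1).factorial := by
    rw [Summable.tsum_eq_zero_add hg1', gc_zero, zero_add]
    exact tsum_congr fun n => gc_succ α w 1 n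
  have hrows : ∀ k, Summable fun n => ‖E α w y k n‖ := by
    intro k
    simp only [E, norm_mul]
    exact (tsum_gc hα₁ hα₂ hw k).1.mul_left _
  have hrowsum : ∀ k, (∑' n, ‖E α w y k n‖)
      = ‖y‖ ^ (k + 1) * ((∑' n, ‖gc α w 1 n‖) ^ (k + 1) / (k + 1).factorial) := by
    intro k
    simp only [E, norm_mul, norm_pow]
    rw [tsum_mul_left, tsum_norm_gc hα₁ hα₂ hw k]
  have hDnorm : Summable fun p : ℕ × ℕ => ‖Function.uncurry (E α w y) p‖ := by
    rw [summable_prod_of_nonneg (fun p => norm_nonneg _)]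
    refine ⟨hrows, ?_⟩
    have hs : Summable fun k : ℕ =>
        (‖y‖ * ∑' n, ‖gc α w 1 n‖) ^ (k + 1) / (k + 1).factorial :=
      (summable_nat_add_iff 1).mpr (Real.summable_pow_div_factorial _)
    refine hs.congr fun k => ?_
    simp only [Function.uncurry_apply_pair]
    rw [hrowsum k, mul_pow]
    ring
  have hDs : Summable (Function.uncurry (E α w y)) := hDnorm.of_norm
  obtain ⟨hcols, hN⟩ :=
    (summable_prod_of_nonneg (f := fun p : ℕ × ℕ => ‖E α w y p.2 p.1‖)
      (fun p => norm_nonneg _)).mp hDnorm.prod_symm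
  have hinner0 : (∑' k, E α w y k 0) = 0 := by
    simp [E, gc_zero]
  have hinner : ∀ n : ℕ, (∑' k, E α w y k (n + 1))
      = (w ^ (n + 1) / (n + 1).factorial) *
          ∑ k ∈ Finset.Icc 1 (n + 1), y ^ k * (Bc α (n + 1) k : ℂ) := by
    intro n
    have hvanish : ∀ k ∉ Finset.range (n + 1), E α w y k (n + 1) = 0 := by
      intro k hk
      rw [Finset.mem_range] at hk
      obtain ⟨k', rfl⟩ : ∃ k', k = k' + 1 := ⟨k - 1, by omega⟩
      have hz : Bc α (n + 1) (k' + 2) = 0 := Bc_eq_zero_of_le (n + 1) k' (by omega)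
      simp only [E, gc_succ]
      rw [show k' + 1 + 1 = k' + 2 from rfl, hz]
      simp
    rw [tsum_eq_sum hvanish,
      show Finset.Icc 1 (n + 1) = Finset.Ico 1 (n + 2) by rw [← Finset.Ico_add_one_right_eq_Icc]; rfl,
      Finset.sum_Ico_eq_sum_range,
      show n + 2 - 1 = n + 1 from rfl, Finset.mul_sum]
    refine Finset.sum_congr rfl fun j hj => ?_
    simp only [E, gc_succ]
    rw [add_comm 1 j]
    ring
  have hterm : ∀ k : ℕ, (y * ∑' n, gc α w 1 n) ^ (k + 1) / ((k + 1).factorial : ℂ)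
      = ∑' n, E α w y k n := by
    intro k
    simp only [E]
    rw [mul_pow, mul_div_assoc, ← (tsum_gc hα₁ hα₂ hw k).2, ← tsum_mul_left]
  have hsumN : Summable fun n => ∑' k, E α w y k n :=
    Summable.of_norm_bounded hN fun n => norm_tsum_le_tsum_norm (hcols n)
  refine ⟨goal1, ?_, ?_⟩
  · rw [← hT]
    have hexps : Summable fun k : ℕ =>
        (y * ∑' n, gc α w 1 n) ^ k / (k.factorial : ℂ) :=
      NormedSpace.expSeries_div_summable _
    calc Complex.exp (y * ∑' n, gc α w 1 n)
        = ∑' k : ℕ, (y * ∑' n, gc α w 1 n) ^ k / (k.factorial : ℂ) := by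
          rw [Complex.exp_eq_exp_ℂ, NormedSpace.exp_eq_tsum_div]
      _ = 1 + ∑' k : ℕ, (y * ∑' n, gc α w 1 n) ^ (k + 1) / ((k + 1).factorial : ℂ) := by
          rw [Summable.tsum_eq_zero_add hexps]
          norm_num
      _ = 1 + ∑' k : ℕ, ∑' n, E α w y k n := by rw [tsum_congr hterm]
      _ = 1 + ∑' n : ℕ, ∑' k, E α w y k n := by
          rw [Summable.tsum_comm' hDs (fun k => (hrows k).of_norm) (fun n => (hcols n).of_norm)]
      _ = 1 + ∑' n : ℕ, ∑' k, E α w y k (n + 1) := by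
          rw [Summable.tsum_eq_zero_add hsumN, hinner0, zero_add]
      _ = 1 + ∑' n : ℕ, (w ^ (n + 1) / (n + 1).factorial) *
            ∑ k ∈ Finset.Icc 1 (n + 1), y ^ k * (Bc α (n + 1) k : ℂ) := by
          rw [tsum_congr hinner]
  · refine Summable.of_nonneg_of_le (fun n => norm_nonneg _) (fun n => ?_)
      ((summable_nat_add_iff 1).mpr hN)
    rw [← hinner n]
    exact norm_tsum_le_tsum_norm (hcols (n + 1))
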